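/- Let α ∈ (0,1), β > 0, and let f : (0,∞) → ℝ be three times continuously differentiable with bounded third derivative on a neighbourhood of s > 0. Let (k_n) be a sequence of positive integers with k_n/n^α → s. Define p⁺_n = (1 − α k_n/n)(α k_n/n + β k_n^{-1/α}) and p⁻_n = (α k_n/n)(n − α k_n)(1/n)(1 − β k_n^{-1/α}). Then n^{1+α} [ (f((k_n+1)/n^α) − f(k_n/n^α)) p⁺_n + (f((k_n−1)/n^α) − f(k_n/n^α)) p⁻_n ] → (β/s^{1/α}) f'(s) + α s f''(s) as n → ∞. -/

import Mathlib

open Real Filter Topology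

lemma quad_taylor {f : ℝ → ℝ} {s ε M : ℝ}
    (hf : ContDiffOn ℝ 3 f (Metric.ball s ε))
    (hM : ∀ y ∈ Metric.ball s ε, |iteratedDeriv 3 f y| ≤ M)
    {x h : ℝ} (hx : Metric.closedBall x |h| ⊆ Metric.ball s ε) :
    |f (x + h) - f x - deriv f x * h - deriv (deriv f) x * h ^ 2 / 2| ≤ M * |h| ^ 3 := by
  set D := Metric.closedBall x |h| with hD
  have hconv : Convex ℝ D := convex_closedBall x |h|
  have hxD : x ∈ D := Metric.mem_closedBall_self (abs_nonneg h)
  have hxhD : x + h ∈ D := by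
    rw [hD, Metric.mem_closedBall, dist_eq]; simp
  have hball : IsOpen (Metric.ball s ε) := Metric.isOpen_ball
  have hM0 : 0 ≤ M := le_trans (abs_nonneg _) (hM x (hx hxD))
  -- derivatives
  have hf1 : ContDiffOn ℝ 2 (deriv f) (Metric.ball s ε) :=
    hf.deriv_of_isOpen hball (by norm_num)
  have hf2 : ContDiffOn ℝ 1 (deriv (deriv f)) (Metric.ball s ε) :=
    hf1.deriv_of_isOpen hball (by norm_num)
  have hd1 : ∀ y ∈ D, HasDerivAt f (deriv f y) y := fun y hy =>
    ((hf.differentiableOn (by norm_num)).differentiableAt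
      (hball.mem_nhds (hx hy))).hasDerivAt
  have hd2 : ∀ y ∈ D, HasDerivAt (deriv f) (deriv (deriv f) y) y := fun y hy =>
    ((hf1.differentiableOn (by norm_num)).differentiableAt
      (hball.mem_nhds (hx hy))).hasDerivAt
  have hd3 : ∀ y ∈ D, HasDerivAt (deriv (deriv f)) (iteratedDeriv 3 f y) y := by
    intro y hy
    have := ((hf2.differentiableOn (by norm_num)).differentiableAt
      (hball.mem_nhds (hx hy))).hasDerivAt
    have h3 : iteratedDeriv 3 f y = deriv (deriv (deriv f)) y := by
      rw [iteratedDeriv_eq_iterate]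
      simp [Function.iterate_succ, Function.iterate_zero]
    rw [h3]
    exact this
  have hdist : ∀ y ∈ D, ‖y - x‖ ≤ |h| := by
    intro y hy
    simpa [Real.norm_eq_abs, dist_eq] using Metric.mem_closedBall.mp hy
  -- Step 1: Lipschitz bound for second derivative
  have step1 : ∀ y ∈ D, |deriv (deriv f) y - deriv (deriv f) x| ≤ M * |h| := by
    intro y hy
    have := hconv.norm_image_sub_le_of_norm_hasDerivWithin_le
      (f' := fun y => iteratedDeriv 3 f y)
      (fun z hz => (hd3 z hz).hasDerivWithinAt)
      (fun z hz => hM z (hx hz)) hxD hy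
    calc |deriv (deriv f) y - deriv (deriv f) x| ≤ M * ‖y - x‖ := this
    _ ≤ M * |h| := mul_le_mul_of_nonneg_left (hdist y hy) hM0
  -- Step 2: bound for g1 y = f' y - f' x - f''(x)(y-x)
  set g1 : ℝ → ℝ := fun y => deriv f y - deriv f x - deriv (deriv f) x * (y - x) with hg1
  have hg1deriv : ∀ y ∈ D, HasDerivAt g1 (deriv (deriv f) y - deriv (deriv f) x) y := by
    intro y hy
    have h1 : HasDerivAt (fun y => deriv (deriv f) x * (y - x)) (deriv (deriv f) x) y := by
      simpa using ((hasDerivAt_id y).sub_const x).const_mul (deriv (deriv f) x)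
    exact ((hd2 y hy).sub_const (deriv f x)).sub h1
  have step2 : ∀ y ∈ D, |g1 y| ≤ M * |h| * |h| := by
    intro y hy
    have h2 := hconv.norm_image_sub_le_of_norm_hasDerivWithin_le
      (f' := fun y => deriv (deriv f) y - deriv (deriv f) x)
      (fun z hz => (hg1deriv z hz).hasDerivWithinAt)
      (fun z hz => step1 z hz) hxD hy
    have hg1x : g1 x = 0 := by simp [hg1]
    rw [hg1x, sub_zero] at h2
    calc |g1 y| = ‖g1 y‖ := rfl
    _ ≤ M * |h| * ‖y - x‖ := h2
    _ ≤ M * |h| * |h| :=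
        mul_le_mul_of_nonneg_left (hdist y hy) (mul_nonneg hM0 (abs_nonneg h))
  -- Step 3
  set g : ℝ → ℝ := fun y =>
    f y - f x - deriv f x * (y - x) - deriv (deriv f) x * (y - x) ^ 2 / 2 with hg
  have hgderiv : ∀ y ∈ D, HasDerivAt g (g1 y) y := by
    intro y hy
    have h1 : HasDerivAt (fun y => deriv f x * (y - x)) (deriv f x) y := by
      simpa using ((hasDerivAt_id y).sub_const x).const_mul (deriv f x)
    have h2 : HasDerivAt (fun y => deriv (deriv f) x * (y - x) ^ 2 / 2)
        (deriv (deriv f) x * (y - x)) y := by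
      have := (((hasDerivAt_id y).sub_const x).pow 2).const_mul
        (deriv (deriv f) x)
      have h3 := this.div_const 2
      refine h3.congr_deriv ?_
      simp only [id, Nat.cast_ofNat, show (2:ℕ) - 1 = 1 from rfl, pow_one, mul_one]; ring
    have := (((hd1 y hy).sub_const (f x)).sub h1).sub h2
    exact this
  have final := hconv.norm_image_sub_le_of_norm_hasDerivWithin_le
    (f' := g1) (fun z hz => (hgderiv z hz).hasDerivWithinAt)
    (fun z hz => step2 z hz) hxD hxhD
  have hgx : g x = 0 := by simp [hg]
  rw [hgx, sub_zero] at final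
  have hgxh : g (x + h) = f (x + h) - f x - deriv f x * h - deriv (deriv f) x * h ^ 2 / 2 := by
    simp [hg]
  rw [← hgxh]
  calc |g (x + h)| = ‖g (x + h)‖ := rfl
  _ ≤ M * |h| * |h| * ‖x + h - x‖ := final
  _ = M * |h| ^ 3 := by rw [show x + h - x = h by ring, Real.norm_eq_abs]; ring

set_option maxHeartbeats 1000000 in
/-- Convergence of the rescaled discrete generator of the cluster-counting chain to
`A f(s) = (β/s^{1/α}) f'(s) + α s f''(s)`. -/
theorem stmt_11 (α β s : ℝ) (hα : α ∈ Set.Ioo (0:ℝ) 1) (hβ : 0 < β) (hs : 0 < s)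
    (f : ℝ → ℝ)
    (hf : ∃ U ∈ nhds s, ContDiffOn ℝ 3 f U ∧ ∃ M : ℝ, ∀ x ∈ U, |iteratedDeriv 3 f x| ≤ M)
    (k : ℕ → ℕ) (hk : ∀ n, 0 < k n)
    (hks : Filter.Tendsto (fun n : ℕ => (k n : ℝ) / (n : ℝ) ^ α) atTop (nhds s)) :
    Filter.Tendsto
      (fun n : ℕ =>
        (n : ℝ) ^ (1 + α) *
          ((f (((k n : ℝ) + 1) / (n : ℝ) ^ α) - f ((k n : ℝ) / (n : ℝ) ^ α)) *
              ((1 - α * (k n : ℝ) / n) *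
                (α * (k n : ℝ) / n + β * (k n : ℝ) ^ (-(1/α)))) +
            (f (((k n : ℝ) - 1) / (n : ℝ) ^ α) - f ((k n : ℝ) / (n : ℝ) ^ α)) *
              ((α * (k n : ℝ) / n) * ((n : ℝ) - α * (k n : ℝ)) * (1 / n) *
                (1 - β * (k n : ℝ) ^ (-(1/α))))))
      atTop
      (nhds (β / s ^ ((1:ℝ)/α) * deriv f s + α * s * deriv (deriv f) s)) := by
  obtain ⟨hα0, hα1⟩ := hα
  obtain ⟨U, hU, hfs, M, hMb⟩ := hf
  obtain ⟨ε, hε, hεU⟩ := Metric.mem_nhds_iff.mp hU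
  have hfball : ContDiffOn ℝ 3 f (Metric.ball s ε) := hfs.mono hεU
  have hMball : ∀ y ∈ Metric.ball s ε, |iteratedDeriv 3 f y| ≤ M :=
    fun y hy => hMb y (hεU hy)
  have hM0 : 0 ≤ M :=
    le_trans (abs_nonneg _) (hMball s (Metric.mem_ball_self hε))
  -- abbreviations
  set X : ℕ → ℝ := fun n => (k n : ℝ) / (n : ℝ) ^ α with hX
  set H : ℕ → ℝ := fun n => ((n : ℝ) ^ α)⁻¹ with hH
  set A : ℕ → ℝ := fun n => α * (k n : ℝ) / n with hA
  set B : ℕ → ℝ := fun n => β * (k n : ℝ) ^ (-(1/α)) with hB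
  set P : ℕ → ℝ := fun n => (1 - A n) * (A n + B n) with hP
  set Q : ℕ → ℝ := fun n => (A n) * ((n : ℝ) - α * (k n : ℝ)) * (1/(n:ℝ)) * (1 - B n) with hQ
  set Rp : ℕ → ℝ := fun n => f (X n + H n) - f (X n) - deriv f (X n) * H n
    - deriv (deriv f) (X n) * H n ^ 2 / 2 with hRp
  set Rm : ℕ → ℝ := fun n => f (X n - H n) - f (X n) + deriv f (X n) * H n
    - deriv (deriv f) (X n) * H n ^ 2 / 2 with hRm
  set T1 : ℕ → ℝ := fun n => (n : ℝ) ^ (1 + α) * H n * (P n - Q n) with hT1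
  set T2 : ℕ → ℝ := fun n => (n : ℝ) ^ (1 + α) * H n ^ 2 * (P n + Q n) with hT2
  set T3 : ℕ → ℝ := fun n => (n : ℝ) ^ (1 + α) * (Rp n * P n + Rm n * Q n) with hT3
  have hNcast : Tendsto (fun n : ℕ => (n : ℝ)) atTop atTop := tendsto_natCast_atTop_atTop
  -- H → 0
  have LH : Tendsto H atTop (𝓝 0) :=
    ((tendsto_rpow_atTop hα0).comp hNcast).inv_tendsto_atTop
  -- A → 0
  have LA : Tendsto A atTop (𝓝 0) := by
    have hAeq : ∀ᶠ n : ℕ in atTop, α * X n * (n : ℝ) ^ (α - 1) = A n := by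
      filter_upwards [eventually_ge_atTop 1] with n hn
      have hn0 : (0:ℝ) < n := by exact_mod_cast hn
      have hnα : (0:ℝ) < (n:ℝ) ^ α := Real.rpow_pos_of_pos hn0 α
      simp only [hX, hA]
      rw [Real.rpow_sub hn0, Real.rpow_one]
      field_simp
    have hpow : Tendsto (fun n : ℕ => (n : ℝ) ^ (α - 1)) atTop (𝓝 0) := by
      have := (tendsto_rpow_neg_atTop (show (0:ℝ) < 1 - α by linarith)).comp hNcast
      simpa [neg_sub, Function.comp_def] using this
    have hbig : Tendsto (fun n : ℕ => α * X n * (n : ℝ) ^ (α - 1)) atTop (𝓝 (α * s * 0)) :=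
      ((tendsto_const_nhds.mul hks).mul hpow)
    have := (Filter.tendsto_congr' hAeq).mp hbig
    simpa using this
  -- n * B → β * s ^ (-(1/α))
  have LNB : Tendsto (fun n : ℕ => (n : ℝ) * B n) atTop (𝓝 (β * s ^ (-(1/α)))) := by
    have hNBeq : ∀ᶠ n : ℕ in atTop,
        β * (X n) ^ (-(1/α)) = (n : ℝ) * B n := by
      filter_upwards [eventually_ge_atTop 1] with n hn
      have hn0 : (0:ℝ) < n := by exact_mod_cast hn
      have hk0 : (0:ℝ) ≤ (k n : ℝ) := Nat.cast_nonneg _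
      have key : (X n) ^ (-(1/α)) = (k n : ℝ) ^ (-(1/α)) * (n : ℝ) := by
        simp only [hX]
        rw [Real.div_rpow hk0 (Real.rpow_nonneg (Nat.cast_nonneg n) α),
          ← Real.rpow_mul (Nat.cast_nonneg n),
          show α * (-(1/α)) = -1 by field_simp,
          Real.rpow_neg_one]
        field_simp
      rw [key]; simp only [hB]; ring
    have hc : ContinuousAt (fun y : ℝ => y ^ (-(1/α))) s :=
      Real.continuousAt_rpow_const s _ (Or.inl hs.ne')
    have hbig : Tendsto (fun n : ℕ => β * (X n) ^ (-(1/α))) atTop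
        (𝓝 (β * s ^ (-(1/α)))) :=
      (hc.tendsto.comp hks).const_mul β
    exact (Filter.tendsto_congr' hNBeq).mp hbig
  -- B → 0
  have LB : Tendsto B atTop (𝓝 0) := by
    have hBeq : ∀ᶠ n : ℕ in atTop, ((n : ℝ) * B n) * (n : ℝ)⁻¹ = B n := by
      filter_upwards [eventually_ge_atTop 1] with n hn
      have hn0 : (0:ℝ) < n := by exact_mod_cast hn
      field_simp
    have hbig := LNB.mul (tendsto_inv_atTop_zero.comp hNcast)
    rw [mul_zero] at hbig
    exact (Filter.tendsto_congr' hBeq).mp hbig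
  -- continuity of derivatives
  have hf1 : ContDiffOn ℝ 2 (deriv f) (Metric.ball s ε) :=
    hfball.deriv_of_isOpen Metric.isOpen_ball (by norm_num)
  have hf2 : ContDiffOn ℝ 1 (deriv (deriv f)) (Metric.ball s ε) :=
    hf1.deriv_of_isOpen Metric.isOpen_ball (by norm_num)
  have contD : Tendsto (fun n => deriv f (X n)) atTop (𝓝 (deriv f s)) :=
    ((hf1.continuousOn.continuousAt (Metric.ball_mem_nhds s hε)).tendsto).comp hks
  have contDD : Tendsto (fun n => deriv (deriv f) (X n)) atTop (𝓝 (deriv (deriv f) s)) :=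
    ((hf2.continuousOn.continuousAt (Metric.ball_mem_nhds s hε)).tendsto).comp hks
  -- T1 limit
  have hT1eq : ∀ᶠ n : ℕ in atTop,
      (1 - A n ^ 2) * ((n : ℝ) * B n) = T1 n := by
    filter_upwards [eventually_ge_atTop 1] with n hn
    have hn0 : (0:ℝ) < n := by exact_mod_cast hn
    have hnα : (0:ℝ) < (n:ℝ) ^ α := Real.rpow_pos_of_pos hn0 α
    simp only [hT1, hP, hQ, hA, hB, hH]
    rw [Real.rpow_add hn0, Real.rpow_one]
    field_simp
    ring
  have LT1 : Tendsto T1 atTop (𝓝 (β * s ^ (-(1/α)))) := by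
    have hbig : Tendsto (fun n : ℕ => (1 - A n ^ 2) * ((n : ℝ) * B n)) atTop
        (𝓝 ((1 - (0:ℝ) ^ 2) * (β * s ^ (-(1/α))))) :=
      (tendsto_const_nhds.sub (LA.pow 2)).mul LNB
    have := (Filter.tendsto_congr' hT1eq).mp hbig
    simpa using this
  -- T2 limit
  have hT2eq : ∀ᶠ n : ℕ in atTop,
      (1 - A n) * (2 * (α * X n) + ((n : ℝ) * B n) * H n * (1 - A n)) = T2 n := by
    filter_upwards [eventually_ge_atTop 1] with n hn
    have hn0 : (0:ℝ) < n := by exact_mod_cast hn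
    have hnα : (0:ℝ) < (n:ℝ) ^ α := Real.rpow_pos_of_pos hn0 α
    simp only [hT2, hP, hQ, hA, hB, hH, hX]
    rw [Real.rpow_add hn0, Real.rpow_one]
    field_simp
    ring
  have LT2 : Tendsto T2 atTop (𝓝 (2 * (α * s))) := by
    have hbig : Tendsto (fun n : ℕ => (1 - A n) * (2 * (α * X n) + ((n : ℝ) * B n) * H n * (1 - A n)))
        atTop (𝓝 ((1 - 0) * (2 * (α * s) + (β * s ^ (-(1/α))) * 0 * (1 - 0)))) :=
      (tendsto_const_nhds.sub LA).mul
        (((tendsto_const_nhds.mul hks).const_mul 2).add ((LNB.mul LH).mul (tendsto_const_nhds.sub LA)))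
    have := (Filter.tendsto_congr' hT2eq).mp hbig
    simpa using this
  -- T3 bound and limit
  have hQeq : ∀ᶠ n : ℕ in atTop, Q n = A n * (1 - A n) * (1 - B n) := by
    filter_upwards [eventually_ge_atTop 1] with n hn
    have hn0 : (0:ℝ) < n := by exact_mod_cast hn
    simp only [hQ, hA]
    field_simp
  have hT3bound : ∀ᶠ n : ℕ in atTop, |T3 n| ≤ M * H n * T2 n := by
    have hXev : ∀ᶠ n : ℕ in atTop, |X n - s| < ε / 2 := by
      have := hks (Metric.ball_mem_nhds s (half_pos hε))
      simpa [Real.dist_eq] using this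
    have hHev : ∀ᶠ n : ℕ in atTop, H n < ε / 2 := by
      have := LH (Metric.ball_mem_nhds (0:ℝ) (half_pos hε))
      filter_upwards [this] with n hn
      have : |H n| < ε / 2 := by simpa [Real.dist_eq] using hn
      exact lt_of_abs_lt this
    have hAev : ∀ᶠ n : ℕ in atTop, A n < 1 := by
      have := LA (Metric.ball_mem_nhds (0:ℝ) one_pos)
      filter_upwards [this] with n hn
      exact lt_of_abs_lt (by simpa [Real.dist_eq] using hn)
    have hBev : ∀ᶠ n : ℕ in atTop, B n < 1 := by
      have := LB (Metric.ball_mem_nhds (0:ℝ) one_pos)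
      filter_upwards [this] with n hn
      exact lt_of_abs_lt (by simpa [Real.dist_eq] using hn)
    filter_upwards [hXev, hHev, hAev, hBev, hQeq, eventually_ge_atTop 1] with n hXn hHn hAn hBn hQn hn1
    have hn0 : (0:ℝ) < n := by exact_mod_cast hn1
    have hH0 : 0 ≤ H n := by
      simp only [hH]
      positivity
    have hsub : Metric.closedBall (X n) |H n| ⊆ Metric.ball s ε := by
      intro y hy
      have h1 : |y - X n| ≤ |H n| := by
        simpa [Real.dist_eq] using Metric.mem_closedBall.mp hy
      have h2 : |H n| = H n := abs_of_nonneg hH0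
      rw [Metric.mem_ball, Real.dist_eq]
      calc |y - s| ≤ |y - X n| + |X n - s| := abs_sub_le y (X n) s
      _ < ε / 2 + ε / 2 := by rw [h2] at h1; exact add_lt_add (h1.trans_lt hHn) hXn
      _ = ε := by ring
    -- remainder bounds
    have hRpb : |Rp n| ≤ M * H n ^ 3 := by
      have := quad_taylor hfball hMball (x := X n) (h := H n) hsub
      rw [abs_of_nonneg hH0] at this
      simpa only [hRp] using this
    have hRmb : |Rm n| ≤ M * H n ^ 3 := by
      have hsub' : Metric.closedBall (X n) |-(H n)| ⊆ Metric.ball s ε := by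
        rwa [abs_neg]
      have h2 := quad_taylor hfball hMball (x := X n) (h := -(H n)) hsub'
      rw [abs_neg, abs_of_nonneg hH0] at h2
      rw [show X n + -(H n) = X n - H n from by ring] at h2
      have heq : f (X n - H n) - f (X n) - deriv f (X n) * -(H n)
          - deriv (deriv f) (X n) * (-(H n)) ^ 2 / 2 = Rm n := by
        simp only [hRm]; ring
      rwa [heq] at h2
    -- nonnegativity
    have hA0 : 0 ≤ A n := by
      simp only [hA]; positivity
    have hB0 : 0 ≤ B n := by
      simp only [hB]; positivity
    have hP0 : 0 ≤ P n := by
      simp only [hP]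
      exact mul_nonneg (by linarith) (by linarith)
    have hQ0 : 0 ≤ Q n := by
      rw [hQn]
      exact mul_nonneg (mul_nonneg hA0 (by linarith)) (by linarith)
    have hpow0 : (0:ℝ) ≤ (n:ℝ) ^ (1 + α) := Real.rpow_nonneg hn0.le _
    have hb1 : |Rp n * P n + Rm n * Q n| ≤ M * H n ^ 3 * (P n + Q n) := by
      calc |Rp n * P n + Rm n * Q n| ≤ |Rp n * P n| + |Rm n * Q n| := abs_add_le _ _
      _ = |Rp n| * P n + |Rm n| * Q n := by
          rw [abs_mul, abs_of_nonneg hP0, abs_mul, abs_of_nonneg hQ0]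
      _ ≤ M * H n ^ 3 * P n + M * H n ^ 3 * Q n :=
          add_le_add (mul_le_mul_of_nonneg_right hRpb hP0) (mul_le_mul_of_nonneg_right hRmb hQ0)
      _ = M * H n ^ 3 * (P n + Q n) := by ring
    calc |T3 n| = (n:ℝ) ^ (1 + α) * |Rp n * P n + Rm n * Q n| := by
          simp only [hT3]
          rw [abs_mul, abs_of_nonneg hpow0]
    _ ≤ (n:ℝ) ^ (1 + α) * (M * H n ^ 3 * (P n + Q n)) :=
        mul_le_mul_of_nonneg_left hb1 hpow0
    _ = M * H n * T2 n := by simp only [hT2]; ring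
  have LT3 : Tendsto T3 atTop (𝓝 0) := by
    have hub : Tendsto (fun n : ℕ => M * H n * T2 n) atTop (𝓝 0) := by
      have := ((tendsto_const_nhds (x := M)).mul LH).mul LT2
      simpa using this
    have hlb := hub.neg
    rw [neg_zero] at hlb
    refine tendsto_of_tendsto_of_tendsto_of_le_of_le' hlb hub ?_ ?_
    · filter_upwards [hT3bound] with n hn
      exact neg_le_of_abs_le hn
    · filter_upwards [hT3bound] with n hn
      exact le_of_abs_le hn
  -- combine
  have hfinal : Tendsto (fun n => deriv f (X n) * T1 n + deriv (deriv f) (X n) / 2 * T2 n + T3 n)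
      atTop (𝓝 (deriv f s * (β * s ^ (-(1/α))) + deriv (deriv f) s / 2 * (2 * (α * s)) + 0)) :=
    ((contD.mul LT1).add ((contDD.div_const 2).mul LT2)).add LT3
  have hG : Tendsto (fun n => deriv f (X n) * T1 n + deriv (deriv f) (X n) / 2 * T2 n + T3 n)
      atTop (𝓝 (β / s ^ ((1:ℝ)/α) * deriv f s + α * s * deriv (deriv f) s)) := by
    convert hfinal using 2
    rw [Real.rpow_neg hs.le]
    ring
  refine hG.congr fun n => ?_
  simp only [hT1, hT2, hT3, hRp, hRm, hP, hQ, hA, hB, hX, hH]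
  rw [show ((k n : ℝ) + 1) / (n:ℝ) ^ α = (k n : ℝ) / (n:ℝ) ^ α + ((n:ℝ) ^ α)⁻¹ from by
    rw [add_div, one_div],
    show ((k n : ℝ) - 1) / (n:ℝ) ^ α = (k n : ℝ) / (n:ℝ) ^ α - ((n:ℝ) ^ α)⁻¹ from by
    rw [sub_div, one_div]]
  ring
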